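/- Let 0 < q < 1 and a, u > 0 with |a u| < 1. The first-type q-Sumudu transform S_q(f)(u) = N_q(f)(u;1) satisfies S_q(e_q(a x))(u) = 1/(1 - a u). -/

import Mathlib

/-- The q-Pochhammer symbol `(a;q)_n`. -/
noncomputable def qPoch (q a : ℝ) (n : ℕ) : ℝ := ∏ k ∈ Finset.range n, (1 - a * q ^ k)

/-- `(a;q)_∞`. -/
noncomputable def qPochInf (q a : ℝ) : ℝ := ∏' k : ℕ, (1 - a * q ^ k)

/-- The q-exponential `e_q(t) = ∑_{n≥0} t^n/(q;q)_n`. -/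
noncomputable def qExp (q t : ℝ) : ℝ := ∑' n : ℕ, t ^ n / qPoch q q n

/-- The first-type q-Natural transform. -/
noncomputable def qNatural (q : ℝ) (f : ℝ → ℝ) (u v : ℝ) : ℝ :=
  qPochInf q q / v * ∑' k : ℕ, q ^ k * f (u / v * q ^ k) / qPoch q q k

/-- The first-type q-Sumudu transform `S_q(f)(u) = N_q(f)(u;1)`. -/
noncomputable def qSumudu (q : ℝ) (f : ℝ → ℝ) (u : ℝ) : ℝ := qNatural q f u 1

section Aux

variable {q t : ℝ}

/-- Positivity of each factor. -/
lemma qFac_pos (hq0 : 0 < q) (hq1 : q < 1) (ht0 : 0 ≤ t) (ht1 : t < 1) (k : ℕ) :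
    0 < 1 - t * q ^ k := by
  have h1 : q ^ k ≤ 1 := pow_le_one₀ hq0.le hq1.le
  have h2 : t * q ^ k ≤ t * 1 := by
    apply mul_le_mul_of_nonneg_left h1 ht0
  nlinarith

lemma qPoch_pos (hq0 : 0 < q) (hq1 : q < 1) (ht0 : 0 ≤ t) (ht1 : t < 1) (n : ℕ) :
    0 < qPoch q t n :=
  Finset.prod_pos fun k _ => qFac_pos hq0 hq1 ht0 ht1 k

lemma qFac_le_one (hq0 : 0 < q) (ht0 : 0 ≤ t) (k : ℕ) :
    1 - t * q ^ k ≤ 1 := by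
  have : 0 ≤ t * q ^ k := by positivity
  linarith

lemma summable_log_qFac (hq0 : 0 < q) (hq1 : q < 1) (ht0 : 0 ≤ t) (ht1 : t < 1) :
    Summable fun k : ℕ => Real.log (1 - t * q ^ k) := by
  apply Summable.of_norm
  have hgeom : Summable fun k : ℕ => t / (1 - t) * q ^ k :=
    (summable_geometric_of_lt_one hq0.le hq1).mul_left _
  apply Summable.of_nonneg_of_le (fun k => norm_nonneg _) (fun k => ?_) hgeom
  have hpos := qFac_pos hq0 hq1 ht0 ht1 k
  have hqk : 0 ≤ t * q ^ k := by positivity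
  have hle1 := qFac_le_one hq0 ht0 k
  have hlog_nonpos : Real.log (1 - t * q ^ k) ≤ 0 := Real.log_nonpos (by linarith) hle1
  rw [Real.norm_eq_abs, abs_of_nonpos hlog_nonpos]
  have h1 : -Real.log (1 - t * q ^ k) = Real.log (1 - t * q ^ k)⁻¹ := (Real.log_inv _).symm
  rw [h1]
  have h2 : Real.log (1 - t * q ^ k)⁻¹ ≤ (1 - t * q ^ k)⁻¹ - 1 :=
    Real.log_le_sub_one_of_pos (by positivity)
  have hqk1 : q ^ k ≤ 1 := pow_le_one₀ hq0.le hq1.le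
  have htq : t * q ^ k ≤ t := by nlinarith
  have h3 : (1 - t * q ^ k)⁻¹ - 1 = (t * q ^ k) / (1 - t * q ^ k) := by
    field_simp
    ring
  have h4 : (t * q ^ k) / (1 - t * q ^ k) ≤ (t * q ^ k) / (1 - t) := by
    gcongr
  calc Real.log (1 - t * q ^ k)⁻¹ ≤ (1 - t * q ^ k)⁻¹ - 1 := h2
    _ = (t * q ^ k) / (1 - t * q ^ k) := h3
    _ ≤ (t * q ^ k) / (1 - t) := h4
    _ = t / (1 - t) * q ^ k := by ring

lemma multipliable_qFac (hq0 : 0 < q) (hq1 : q < 1) (ht0 : 0 ≤ t) (ht1 : t < 1) :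
    Multipliable fun k : ℕ => 1 - t * q ^ k :=
  Real.multipliable_of_summable_log
    (fun k => qFac_pos hq0 hq1 ht0 ht1 k)
    (summable_log_qFac hq0 hq1 ht0 ht1)

lemma qPochInf_eq_exp (hq0 : 0 < q) (hq1 : q < 1) (ht0 : 0 ≤ t) (ht1 : t < 1) :
    qPochInf q t = Real.exp (∑' k : ℕ, Real.log (1 - t * q ^ k)) := by
  have := Real.rexp_tsum_eq_tprod (f := fun k : ℕ => 1 - t * q ^ k)
    (fun k => qFac_pos hq0 hq1 ht0 ht1 k)
    (summable_log_qFac hq0 hq1 ht0 ht1)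
  simpa [qPochInf] using this.symm

lemma qPochInf_pos (hq0 : 0 < q) (hq1 : q < 1) (ht0 : 0 ≤ t) (ht1 : t < 1) :
    0 < qPochInf q t := by
  rw [qPochInf_eq_exp hq0 hq1 ht0 ht1]; exact Real.exp_pos _

lemma qPochInf_le_one (hq0 : 0 < q) (hq1 : q < 1) (ht0 : 0 ≤ t) (ht1 : t < 1) :
    qPochInf q t ≤ 1 := by
  rw [qPochInf_eq_exp hq0 hq1 ht0 ht1]
  rw [Real.exp_le_one_iff]
  apply tsum_nonpos
  intro k
  exact Real.log_nonpos (qFac_pos hq0 hq1 ht0 ht1 k).le (qFac_le_one hq0 ht0 k)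

/-- The splitting identity `(q;q)_∞ = (q;q)_n · (q^{n+1};q)_∞`. -/
lemma qPochInf_split (hq0 : 0 < q) (hq1 : q < 1) (n : ℕ) :
    qPochInf q q = qPoch q q n * qPochInf q (q ^ (n + 1)) := by
  have hqn1 : q ^ (n + 1) < 1 := pow_lt_one₀ hq0.le hq1 (Nat.succ_ne_zero n)
  have hqn0 : (0:ℝ) ≤ q ^ (n + 1) := by positivity
  have hfe : (fun i : ℕ => 1 - q * q ^ (i + n)) = fun i : ℕ => 1 - q ^ (n + 1) * q ^ i := by
    funext i; ring
  have hmul : Multipliable fun i : ℕ => 1 - q * q ^ (i + n) := by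
    rw [hfe]; exact multipliable_qFac hq0 hq1 hqn0 hqn1
  have key := Multipliable.prod_mul_tprod_nat_mul' (f := fun k : ℕ => 1 - q * q ^ k) (k := n) hmul
  rw [qPochInf, ← key, qPoch]
  congr 1
  rw [qPochInf, ← hfe]

lemma qPochInf_le_qPoch (hq0 : 0 < q) (hq1 : q < 1) (n : ℕ) :
    qPochInf q q ≤ qPoch q q n := by
  have hqn1 : q ^ (n + 1) < 1 := pow_lt_one₀ hq0.le hq1 (Nat.succ_ne_zero n)
  have hqn0 : (0:ℝ) ≤ q ^ (n + 1) := by positivity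
  rw [qPochInf_split hq0 hq1 n]
  have h1 := qPochInf_le_one hq0 hq1 hqn0 hqn1
  have h2 := qPochInf_pos hq0 hq1 hqn0 hqn1
  have h3 := qPoch_pos hq0 hq1 hq0.le hq1 n
  nlinarith

/-- Summability of the q-exponential series. -/
lemma summable_qExp (hq0 : 0 < q) (hq1 : q < 1) (ht0 : 0 ≤ t) (ht1 : t < 1) :
    Summable fun n : ℕ => t ^ n / qPoch q q n := by
  have hC : 0 < qPochInf q q := qPochInf_pos hq0 hq1 hq0.le hq1
  have hgeom : Summable fun n : ℕ => (qPochInf q q)⁻¹ * t ^ n :=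
    (summable_geometric_of_lt_one ht0 ht1).mul_left _
  apply Summable.of_nonneg_of_le (fun n => ?_) (fun n => ?_) hgeom
  · exact div_nonneg (pow_nonneg ht0 n) (qPoch_pos hq0 hq1 hq0.le hq1 n).le
  · have hP := qPoch_pos hq0 hq1 hq0.le hq1 n
    have hle := qPochInf_le_qPoch hq0 hq1 n
    have htn : 0 ≤ t ^ n := by positivity
    calc t ^ n / qPoch q q n ≤ t ^ n / qPochInf q q := by gcongr
      _ = (qPochInf q q)⁻¹ * t ^ n := by rw [div_eq_inv_mul]

/-- Functional equation `(1 - t) e_q(t) = e_q(qt)`. -/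
lemma qExp_funct (hq0 : 0 < q) (hq1 : q < 1) (ht0 : 0 ≤ t) (ht1 : t < 1) :
    (1 - t) * qExp q t = qExp q (q * t) := by
  have hqt0 : 0 ≤ q * t := by positivity
  have hqt1 : q * t < 1 := by nlinarith
  have hs1 : Summable fun n : ℕ => t ^ n / qPoch q q n := summable_qExp hq0 hq1 ht0 ht1
  have hs2 : Summable fun n : ℕ => (q * t) ^ n / qPoch q q n := summable_qExp hq0 hq1 hqt0 hqt1
  have hdiff : qExp q t - qExp q (q * t)
      = ∑' n : ℕ, (t ^ n / qPoch q q n - (q * t) ^ n / qPoch q q n) := by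
    rw [qExp, qExp, ← Summable.tsum_sub hs1 hs2]
  have hsd : Summable fun n : ℕ => (t ^ n / qPoch q q n - (q * t) ^ n / qPoch q q n) :=
    hs1.sub hs2
  have hshift : ∀ n : ℕ,
      t ^ (n + 1) / qPoch q q (n + 1) - (q * t) ^ (n + 1) / qPoch q q (n + 1)
        = t * (t ^ n / qPoch q q n) := by
    intro n
    have hP : qPoch q q n ≠ 0 := (qPoch_pos hq0 hq1 hq0.le hq1 n).ne'
    have hPs : qPoch q q (n + 1) = qPoch q q n * (1 - q * q ^ n) := by
      rw [qPoch, Finset.prod_range_succ, qPoch]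
    have hfac : (1 : ℝ) - q * q ^ n ≠ 0 := (qFac_pos hq0 hq1 hq0.le hq1 n).ne'
    rw [hPs]
    field_simp
    ring
  rw [Summable.tsum_eq_zero_add hsd] at hdiff
  simp only [pow_zero] at hdiff
  have h0 : (1 : ℝ) / qPoch q q 0 - 1 / qPoch q q 0 = 0 := by ring
  rw [h0, zero_add] at hdiff
  have : (∑' n : ℕ, (t ^ (n + 1) / qPoch q q (n + 1) - (q * t) ^ (n + 1) / qPoch q q (n + 1)))
      = t * qExp q t := by
    rw [tsum_congr hshift, tsum_mul_left, qExp]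
  rw [this] at hdiff
  linarith

/-- Iterated functional equation. -/
lemma qExp_iter (hq0 : 0 < q) (hq1 : q < 1) (ht0 : 0 ≤ t) (ht1 : t < 1) (N : ℕ) :
    qPoch q t N * qExp q t = qExp q (q ^ N * t) := by
  induction N with
  | zero => simp [qPoch]
  | succ n ih =>
    have h0 : (0:ℝ) ≤ q ^ n * t := by positivity
    have hq1n : q ^ n ≤ 1 := pow_le_one₀ hq0.le hq1.le
    have h1 : q ^ n * t < 1 := by nlinarith
    have hstep := qExp_funct hq0 hq1 h0 h1
    have : qPoch q t (n + 1) * qExp q t = (1 - q ^ n * t) * (qPoch q t n * qExp q t) := by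
      rw [qPoch, Finset.prod_range_succ, qPoch]; ring
    rw [this, ih]
    have harg : q * (q ^ n * t) = q ^ (n + 1) * t := by ring
    rw [hstep, harg]

lemma one_le_qExp (hq0 : 0 < q) (hq1 : q < 1) (ht0 : 0 ≤ t) (ht1 : t < 1) :
    1 ≤ qExp q t := by
  have hs := summable_qExp hq0 hq1 ht0 ht1
  have h0 : t ^ 0 / qPoch q q 0 = 1 := by simp [qPoch]
  rw [qExp]
  calc (1:ℝ) = t ^ 0 / qPoch q q 0 := h0.symm
    _ ≤ ∑' n : ℕ, t ^ n / qPoch q q n := by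
        apply Summable.le_tsum hs 0
        intro n _
        exact div_nonneg (pow_nonneg ht0 n) (qPoch_pos hq0 hq1 hq0.le hq1 n).le

lemma qExp_sub_one_le (hq0 : 0 < q) (hq1 : q < 1) (ht0 : 0 ≤ t) (ht1 : t < 1)
    {s : ℝ} (hs0 : 0 ≤ s) (hst : s ≤ t) :
    qExp q s - 1 ≤ s / qPochInf q q * (1 - t)⁻¹ := by
  have hC : 0 < qPochInf q q := qPochInf_pos hq0 hq1 hq0.le hq1
  have hs1 : s < 1 := lt_of_le_of_lt hst ht1
  have hsum := summable_qExp hq0 hq1 hs0 hs1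
  have hsum' : Summable fun n : ℕ => s ^ (n + 1) / qPoch q q (n + 1) :=
    hsum.comp_injective (add_left_injective 1)
  have hexp : qExp q s = 1 + ∑' n : ℕ, s ^ (n + 1) / qPoch q q (n + 1) := by
    rw [qExp, Summable.tsum_eq_zero_add hsum]
    simp [qPoch]
  rw [hexp]
  have hbound : ∀ n : ℕ, s ^ (n + 1) / qPoch q q (n + 1)
      ≤ s / qPochInf q q * t ^ n := by
    intro n
    have hP := qPoch_pos hq0 hq1 hq0.le hq1 (n + 1)
    have hle := qPochInf_le_qPoch hq0 hq1 (n + 1)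
    have h1 : s ^ (n + 1) / qPoch q q (n + 1) ≤ s ^ (n + 1) / qPochInf q q := by
      gcongr
    refine h1.trans ?_
    rw [div_le_iff₀ hC, mul_comm (s / qPochInf q q * t ^ n) (qPochInf q q)]
    have h2 : s ^ (n + 1) ≤ s * t ^ n := by
      rw [pow_succ']
      apply mul_le_mul_of_nonneg_left (pow_le_pow_left₀ hs0 hst n) hs0
    calc s ^ (n + 1) ≤ s * t ^ n := h2
      _ = qPochInf q q * (s / qPochInf q q * t ^ n) := by field_simp
  have hgs : Summable fun n : ℕ => s / qPochInf q q * t ^ n :=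
    (summable_geometric_of_lt_one ht0 ht1).mul_left _
  have htsum : (∑' n : ℕ, s ^ (n + 1) / qPoch q q (n + 1))
      ≤ ∑' n : ℕ, s / qPochInf q q * t ^ n := Summable.tsum_le_tsum hbound hsum' hgs
  have hgeo : (∑' n : ℕ, s / qPochInf q q * t ^ n) = s / qPochInf q q * (1 - t)⁻¹ := by
    rw [tsum_mul_left, tsum_geometric_of_lt_one ht0 ht1]
  rw [hgeo] at htsum
  linarith

/-- Euler's identity: `(t;q)_∞ · e_q(t) = 1` for `0 ≤ t < 1`. -/
lemma qPochInf_mul_qExp (hq0 : 0 < q) (hq1 : q < 1) (ht0 : 0 ≤ t) (ht1 : t < 1) :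
    qPochInf q t * qExp q t = 1 := by
  have hC : 0 < qPochInf q q := qPochInf_pos hq0 hq1 hq0.le hq1
  have hmul := multipliable_qFac hq0 hq1 ht0 ht1
  have h1 : Filter.Tendsto (fun N : ℕ => qPoch q t N * qExp q t) Filter.atTop
      (nhds (qPochInf q t * qExp q t)) := by
    apply Filter.Tendsto.mul_const
    exact hmul.hasProd.tendsto_prod_nat
  have h2 : Filter.Tendsto (fun N : ℕ => qExp q (q ^ N * t)) Filter.atTop (nhds 1) := by
    have hub : ∀ N : ℕ, qExp q (q ^ N * t) - 1 ≤ t / qPochInf q q * (1 - t)⁻¹ * q ^ N := by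
      intro N
      have h0 : (0:ℝ) ≤ q ^ N * t := by positivity
      have hq1n : q ^ N ≤ 1 := pow_le_one₀ hq0.le hq1.le
      have hst : q ^ N * t ≤ t := by nlinarith
      have := qExp_sub_one_le hq0 hq1 ht0 ht1 h0 hst
      calc qExp q (q ^ N * t) - 1 ≤ q ^ N * t / qPochInf q q * (1 - t)⁻¹ := this
        _ = t / qPochInf q q * (1 - t)⁻¹ * q ^ N := by ring
    have hlb : ∀ N : ℕ, 0 ≤ qExp q (q ^ N * t) - 1 := by
      intro N
      have h0 : (0:ℝ) ≤ q ^ N * t := by positivity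
      have hq1n : q ^ N ≤ 1 := pow_le_one₀ hq0.le hq1.le
      have h1' : q ^ N * t < 1 := by nlinarith
      linarith [one_le_qExp hq0 hq1 h0 h1']
    have htend : Filter.Tendsto (fun N : ℕ => t / qPochInf q q * (1 - t)⁻¹ * q ^ N)
        Filter.atTop (nhds 0) := by
      rw [show (0:ℝ) = t / qPochInf q q * (1 - t)⁻¹ * 0 by ring]
      exact (tendsto_pow_atTop_nhds_zero_of_lt_one hq0.le hq1).const_mul _
    have hzero : Filter.Tendsto (fun N : ℕ => qExp q (q ^ N * t) - 1) Filter.atTop (nhds 0) :=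
      squeeze_zero hlb hub htend
    have := hzero.add_const 1
    simpa using this
  have heq : (fun N : ℕ => qPoch q t N * qExp q t) = fun N : ℕ => qExp q (q ^ N * t) := by
    funext N; exact qExp_iter hq0 hq1 ht0 ht1 N
  rw [heq] at h1
  exact tendsto_nhds_unique h1 h2

lemma qExp_eq (hq0 : 0 < q) (hq1 : q < 1) (ht0 : 0 ≤ t) (ht1 : t < 1) :
    qExp q t = 1 / qPochInf q t := by
  have h := qPochInf_mul_qExp hq0 hq1 ht0 ht1
  have hPos := qPochInf_pos hq0 hq1 ht0 ht1
  field_simp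
  linarith [h]

/-- Special value: `e_q(q^{n+1}) = (q;q)_n / (q;q)_∞`. -/
lemma qExp_pow_succ (hq0 : 0 < q) (hq1 : q < 1) (n : ℕ) :
    qExp q (q ^ (n + 1)) = qPoch q q n / qPochInf q q := by
  have hqn1 : q ^ (n + 1) < 1 := pow_lt_one₀ hq0.le hq1 (Nat.succ_ne_zero n)
  have hqn0 : (0:ℝ) ≤ q ^ (n + 1) := by positivity
  rw [qExp_eq hq0 hq1 hqn0 hqn1]
  have hsplit := qPochInf_split hq0 hq1 n
  have h1 := qPochInf_pos hq0 hq1 hqn0 hqn1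
  have h2 := qPoch_pos hq0 hq1 hq0.le hq1 n
  have h3 := qPochInf_pos hq0 hq1 hq0.le hq1
  rw [hsplit]
  field_simp

/-- Auxiliary double-indexed family. -/
noncomputable def Gaux (q b : ℝ) (k n : ℕ) : ℝ :=
  q ^ k / qPoch q q k * ((b * q ^ k) ^ n / qPoch q q n)

lemma Gaux_summable {q b : ℝ} (hq0 : 0 < q) (hq1 : q < 1) (hb0 : 0 < b) (hb1 : b < 1) :
    Summable (Function.uncurry (Gaux q b)) := by
  have hC : 0 < qPochInf q q := qPochInf_pos hq0 hq1 hq0.le hq1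
  have hPpos : ∀ n : ℕ, 0 < qPoch q q n := qPoch_pos hq0 hq1 hq0.le hq1
  have hf : Summable fun k : ℕ => q ^ k / qPochInf q q :=
    (summable_geometric_of_lt_one hq0.le hq1).div_const _
  have hg : Summable fun n : ℕ => b ^ n / qPochInf q q :=
    (summable_geometric_of_lt_one hb0.le hb1).div_const _
  have hprod : Summable fun p : ℕ × ℕ =>
      (q ^ p.1 / qPochInf q q) * (b ^ p.2 / qPochInf q q) := by
    apply Summable.mul_of_nonneg hf hg
    · intro k
      exact div_nonneg (pow_nonneg hq0.le k) hC.le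
    · intro n
      exact div_nonneg (pow_nonneg hb0.le n) hC.le
  apply Summable.of_nonneg_of_le (fun p => ?_) (fun p => ?_) hprod
  · exact mul_nonneg (div_nonneg (pow_nonneg hq0.le p.1) (hPpos p.1).le)
      (div_nonneg (pow_nonneg (mul_nonneg hb0.le (pow_nonneg hq0.le p.1)) p.2) (hPpos p.2).le)
  · obtain ⟨k, n⟩ := p
    show q ^ k / qPoch q q k * ((b * q ^ k) ^ n / qPoch q q n)
        ≤ (q ^ k / qPochInf q q) * (b ^ n / qPochInf q q)
    have h1 := hPpos k
    have h2 := hPpos n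
    have hle1 := qPochInf_le_qPoch hq0 hq1 k
    have hle2 := qPochInf_le_qPoch hq0 hq1 n
    have hqk0 : (0:ℝ) ≤ q ^ k := pow_nonneg hq0.le k
    have hbq : (b * q ^ k) ^ n ≤ b ^ n := by
      rw [mul_pow]
      have hqkn0 : (0:ℝ) ≤ (q ^ k) ^ n := pow_nonneg hqk0 n
      have hqk1 : (q ^ k) ^ n ≤ 1 := pow_le_one₀ hqk0 (pow_le_one₀ hq0.le hq1.le)
      nlinarith [pow_nonneg hb0.le n]
    have hbn0 : (0:ℝ) ≤ (b * q ^ k) ^ n :=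
      pow_nonneg (mul_nonneg hb0.le hqk0) n
    have e1 : q ^ k / qPoch q q k ≤ q ^ k / qPochInf q q := by gcongr
    have e2 : (b * q ^ k) ^ n / qPoch q q n ≤ b ^ n / qPochInf q q := by
      calc (b * q ^ k) ^ n / qPoch q q n ≤ (b * q ^ k) ^ n / qPochInf q q := by gcongr
        _ ≤ b ^ n / qPochInf q q := by gcongr
    exact mul_le_mul e1 e2 (div_nonneg hbn0 h2.le) (div_nonneg hqk0 hC.le)

lemma Gaux_alg {q b : ℝ} (k n : ℕ) :
    Gaux q b k n = b ^ n / qPoch q q n * ((q ^ (n + 1)) ^ k / qPoch q q k) := by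
  have hq : (q ^ (n + 1)) ^ k = q ^ k * (q ^ k) ^ n := by
    rw [← pow_mul, ← pow_mul, ← pow_add]
    congr 1
    ring
  rw [Gaux, hq, mul_pow]
  ring

end Aux

/-- For `0 < q < 1`, `a, u > 0` with `|a u| < 1`, `S_q(e_q(a x))(u) = 1/(1 - a u)`. -/
theorem qSumudu_qExp (q a u : ℝ) (hq0 : 0 < q) (hq1 : q < 1)
    (ha : 0 < a) (hu : 0 < u) (h : |a * u| < 1) :
    qSumudu q (fun x => qExp q (a * x)) u = 1 / (1 - a * u) := by
  have hb0 : 0 < a * u := mul_pos ha hu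
  have hb1 : a * u < 1 := by rwa [abs_of_pos hb0] at h
  have hC : 0 < qPochInf q q := qPochInf_pos hq0 hq1 hq0.le hq1
  have hPpos : ∀ n : ℕ, 0 < qPoch q q n := qPoch_pos hq0 hq1 hq0.le hq1
  have hGsum : Summable (Function.uncurry (Gaux q (a * u))) := Gaux_summable hq0 hq1 hb0 hb1
  -- each row of the double sum
  have hterm : ∀ k : ℕ, q ^ k * qExp q (a * u * q ^ k) / qPoch q q k
      = ∑' n : ℕ, Gaux q (a * u) k n := by
    intro k
    simp only [Gaux, qExp]
    rw [tsum_mul_left]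
    field_simp
  -- swap the order of summation
  have hswap : (∑' k : ℕ, ∑' n : ℕ, Gaux q (a * u) k n)
      = ∑' n : ℕ, ∑' k : ℕ, Gaux q (a * u) k n := (Summable.tsum_comm hGsum).symm
  -- inner sum over k for fixed n
  have hinner : ∀ n : ℕ, (∑' k : ℕ, Gaux q (a * u) k n) = (a * u) ^ n / qPochInf q q := by
    intro n
    have step1 : (∑' k : ℕ, Gaux q (a * u) k n)
        = (a * u) ^ n / qPoch q q n * ∑' k : ℕ, (q ^ (n + 1)) ^ k / qPoch q q k := by
      rw [← tsum_mul_left]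
      exact tsum_congr fun k => Gaux_alg k n
    rw [step1]
    have step2 : (∑' k : ℕ, (q ^ (n + 1)) ^ k / qPoch q q k) = qExp q (q ^ (n + 1)) := rfl
    rw [step2, qExp_pow_succ hq0 hq1 n]
    have hP := (hPpos n).ne'
    field_simp
  have hgeo : (∑' n : ℕ, (a * u) ^ n / qPochInf q q) = (1 - a * u)⁻¹ / qPochInf q q := by
    rw [tsum_div_const, tsum_geometric_of_lt_one hb0.le hb1]
  rw [qSumudu, qNatural]
  have hargs : ∀ k : ℕ, a * (u / 1 * q ^ k) = a * u * q ^ k := fun k => by ring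
  have hsum_eq : (∑' k : ℕ, q ^ k * qExp q (a * (u / 1 * q ^ k)) / qPoch q q k)
      = (1 - a * u)⁻¹ / qPochInf q q := by
    calc (∑' k : ℕ, q ^ k * qExp q (a * (u / 1 * q ^ k)) / qPoch q q k)
        = ∑' k : ℕ, q ^ k * qExp q (a * u * q ^ k) / qPoch q q k := by
          exact tsum_congr fun k => by rw [hargs k]
      _ = ∑' k : ℕ, ∑' n : ℕ, Gaux q (a * u) k n := tsum_congr hterm
      _ = ∑' n : ℕ, ∑' k : ℕ, Gaux q (a * u) k n := hswap
      _ = ∑' n : ℕ, (a * u) ^ n / qPochInf q q := tsum_congr hinner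
      _ = (1 - a * u)⁻¹ / qPochInf q q := hgeo
  rw [hsum_eq, div_one, mul_comm, div_mul_cancel₀ _ hC.ne', one_div]
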